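/- Let k ∈ ℕ and let N = (N₁,…,N_k) be a Gaussian random vector with independent centered entries each of variance σ². Let ℝ^k_{>0} = {ȳ ∈ ℝ^k : y₁ > ⋯ > y_k > 0}, and say a subset Q ⊆ ℝ^k_> is closed under ℝ^k_{>0}-displacement if whenever x̄ ∈ Q and ȳ ∈ ℝ^k_{>0} then x̄ + ȳ ∈ Q. For ā ∈ ℝ^k_>, let μ_{ā,σ,Q} denote the conditional distribution of N given that ā + N ∈ Q (assuming P(ā + N ∈ Q) > 0). Fix M > 0 and c ∈ (0,1). Then for all ε > 0 there exists δ = δ(ε, M, c) > 0 such that for all ā ∈ ℝ^k_> with ‖ā‖_∞ ≤ M, all σ ∈ (c, c⁻¹), all Q ⊆ ℝ^k_> closed under ℝ^k_{>0}-displacement with P(ā + N ∈ Q) > 0, and each pair 1 ≤ i < j ≤ k: μ_{ā,σ,Q}{ x̄ ∈ ℝ^k : |(x_i + a_i) − (x_j + a_j)| < δ and x₁ ≤ M } < ε. -/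

import Mathlib

open MeasureTheory ProbabilityTheory
open scoped ENNReal NNReal

noncomputable section

lemma aux_lintegral_pi {n : ℕ} (μ : Fin n → Measure ℝ) [∀ i, SigmaFinite (μ i)]
    (f : Fin n → ℝ → ℝ≥0∞) (hf : ∀ i, Measurable (f i)) :
    ∫⁻ x, ∏ i, f i (x i) ∂(Measure.pi μ) = ∏ i, ∫⁻ t, f i t ∂(μ i) := by
  induction n with
  | zero => simp [Measure.pi_of_empty]
  | succ n ih =>
    have hmp := measurePreserving_piFinSuccAbove μ 0
    calc ∫⁻ x, ∏ i, f i (x i) ∂(Measure.pi μ)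
        = ∫⁻ y : ℝ × (Fin n → ℝ), f 0 y.1 * ∏ i : Fin n, f (Fin.succ i) (y.2 i)
            ∂((μ 0).prod (Measure.pi fun j => μ (Fin.succAbove 0 j))) := by
          rw [← hmp.lintegral_comp]
          · congr 1; ext x
            simp [MeasurableEquiv.piFinSuccAbove, Fin.prod_univ_succ, Fin.zero_succAbove, Fin.tail]
          · exact ((hf 0).comp measurable_fst).mul <|
              Finset.measurable_prod _ fun i _ =>
                (hf _).comp ((measurable_pi_apply i).comp measurable_snd)
      _ = (∫⁻ t, f 0 t ∂(μ 0)) * ∏ i : Fin n, ∫⁻ t, f (Fin.succ i) t ∂(μ (Fin.succ i)) := by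
          rw [lintegral_prod_mul (f := f 0) (g := fun y : Fin n → ℝ => ∏ i, f (Fin.succ i) (y i))
            ((hf 0).aemeasurable)
            ((Finset.measurable_prod _ fun i _ => (hf _).comp (measurable_pi_apply i)).aemeasurable)]
          congr 1
          have := ih (fun j => μ (Fin.succ j)) (fun j => f (Fin.succ j)) (fun j => hf _)
          simpa [Fin.zero_succAbove] using this
      _ = ∏ i, ∫⁻ t, f i t ∂(μ i) := by rw [Fin.prod_univ_succ]

lemma aux_pi_gauss (k : ℕ) (v : ℝ≥0) (hv : v ≠ 0) :
    Measure.pi (fun _ : Fin k => gaussianReal 0 v)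
      = volume.withDensity (fun x : Fin k → ℝ => ∏ i, gaussianPDF 0 v (x i)) := by
  refine (Measure.pi_eq (μ := fun _ : Fin k => gaussianReal 0 v)
    (μ' := volume.withDensity fun x : Fin k → ℝ => ∏ i, gaussianPDF 0 v (x i)) fun s hs => ?_)
  rw [withDensity_apply _ (MeasurableSet.univ_pi hs)]
  have h1 : ∫⁻ x in Set.pi Set.univ s, ∏ i, gaussianPDF 0 v (x i) ∂(volume : Measure (Fin k → ℝ))
      = ∫⁻ x, ∏ i, (s i).indicator (gaussianPDF 0 v) (x i) ∂(volume : Measure (Fin k → ℝ)) := by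
    rw [← lintegral_indicator (MeasurableSet.univ_pi hs)]
    congr 1; ext x
    by_cases hx : x ∈ Set.pi Set.univ s
    · rw [Set.indicator_of_mem hx]
      exact Finset.prod_congr rfl fun i _ => (Set.indicator_of_mem (hx i (Set.mem_univ i)) _).symm
    · rw [Set.indicator_of_notMem hx]
      obtain ⟨i, -, hi⟩ : ∃ i ∈ Set.univ, x i ∉ s i := by simpa [Set.mem_pi] using hx
      exact (Finset.prod_eq_zero (Finset.mem_univ i) (Set.indicator_of_notMem hi _)).symm
  rw [h1]
  rw [show (volume : Measure (Fin k → ℝ)) = Measure.pi (fun _ => volume) from volume_pi]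
  rw [aux_lintegral_pi _ _ (fun i => (measurable_gaussianPDF 0 v).indicator (hs i))]
  refine Finset.prod_congr rfl fun i _ => ?_
  rw [lintegral_indicator (hs i), gaussianReal_apply _ hv (s i)]

lemma aux_map_pi {k : ℕ} {Ω : Type} [MeasurableSpace Ω] (P : Measure Ω)
    [IsProbabilityMeasure P] (N : Fin k → Ω → ℝ) (hN : ∀ i, Measurable (N i))
    (hind : iIndepFun N P) (ρ : Fin k → Measure ℝ)
    (hmap : ∀ i, Measure.map (N i) P = ρ i) [∀ i, SigmaFinite (ρ i)] :
    Measure.map (fun ω i => N i ω) P = Measure.pi ρ := by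
  refine (Measure.pi_eq (μ := ρ) (μ' := Measure.map (fun ω i => N i ω) P) fun s hs => ?_).symm
  rw [Measure.map_apply (measurable_pi_lambda _ hN) (MeasurableSet.univ_pi hs)]
  have hpre : (fun ω i => N i ω) ⁻¹' Set.pi Set.univ s = ⋂ i ∈ Finset.univ, N i ⁻¹' s i := by
    ext ω; simp [Set.mem_pi]
  rw [hpre, hind.measure_inter_preimage_eq_mul Finset.univ (fun i _ => hs i)]
  exact Finset.prod_congr rfl fun i _ => by
    rw [← hmap i, Measure.map_apply (hN i) (hs i)]

lemma aux_pdf_term (M c σ : ℝ) (hM : 0 < M) (hc0 : 0 < c) (hcσ : c < σ) (k : ℕ)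
    (x w : ℝ) (hx : x ≤ 3*M) (hw0 : 0 ≤ w) (hwk : w ≤ k) :
    Real.exp (-((6*M*k + k^2)/(2*c^2))) * gaussianPDFReal 0 (σ^2).toNNReal x
      ≤ gaussianPDFReal 0 (σ^2).toNNReal (x + w) := by
  have hσ : 0 < σ := hc0.trans hcσ
  have hv : ((σ^2).toNNReal : ℝ) = σ^2 := Real.coe_toNNReal _ (sq_nonneg σ)
  rw [gaussianPDFReal, gaussianPDFReal, hv]
  rw [mul_comm (Real.exp _) _, mul_assoc]
  refine mul_le_mul_of_nonneg_left ?_ (by positivity)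
  rw [← Real.exp_add]
  refine Real.exp_le_exp.mpr ?_
  have hnum : 2*x*w + w^2 ≤ 6*M*k + k^2 := by nlinarith
  have hden : 2*c^2 ≤ 2*σ^2 := by nlinarith
  have key : (2*x*w + w^2)/(2*σ^2) ≤ (6*M*k + k^2)/(2*c^2) :=
    div_le_div₀ (by positivity) hnum (by positivity) hden
  have expand : -(x + w - 0)^2/(2*σ^2) = -(x-0)^2/(2*σ^2) - (2*x*w + w^2)/(2*σ^2) := by
    field_simp; ring
  rw [expand]
  linarith [key]


/-- **Lemma 5.10 (lemqn).** Let `N = (N₁, …, N_k)` be a Gaussian vector with independent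
centered entries of variance `σ²`, and let `Q ⊆ ℝ^k_>` be closed under
`ℝ^k_{>0}`-displacement. For `a ∈ ℝ^k_>`, let `μ_{a,σ,Q}` be the conditional distribution of
`N` given `a + N ∈ Q`. Fix `M > 0` and `c ∈ (0,1)`. For all `ε > 0` there exists `δ > 0`
such that for all `a ∈ ℝ^k_>` with `‖a‖∞ ≤ M`, all `σ ∈ (c, c⁻¹)`, all such `Q` with
`P (a + N ∈ Q) > 0`, and each pair `i < j`:
`μ_{a,σ,Q} {x | |(x_i + a_i) - (x_j + a_j)| < δ and x₁ ≤ M} < ε`. -/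
theorem lem_qn
    (k : ℕ) (hk : 0 < k) (M c : ℝ) (hM : 0 < M) (hc0 : 0 < c) (hc1 : c < 1)
    (ε : ℝ) (hε : 0 < ε) :
    ∃ δ > 0, ∀ (Ω : Type) (_ : MeasurableSpace Ω) (P : Measure Ω),
      IsProbabilityMeasure P →
      ∀ (N : Fin k → Ω → ℝ) (σ : ℝ), c < σ → σ < c⁻¹ →
      (∀ i, Measurable (N i)) →
      iIndepFun N P →
      (∀ i, Measure.map (N i) P = gaussianReal 0 (σ ^ 2).toNNReal) →
      ∀ a : Fin k → ℝ, StrictAnti a → (∀ i, |a i| ≤ M) →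
      ∀ Q : Set (Fin k → ℝ), MeasurableSet Q → (∀ z ∈ Q, StrictAnti z) →
      (∀ z ∈ Q, ∀ w : Fin k → ℝ, StrictAnti w → (∀ i, 0 < w i) → z + w ∈ Q) →
      P {ω | (fun i => a i + N i ω) ∈ Q} ≠ 0 →
      ∀ i j : Fin k, i < j →
        Measure.map (fun ω i => N i ω)
            (ProbabilityTheory.cond P {ω | (fun i => a i + N i ω) ∈ Q})
            {z | |(z i + a i) - (z j + a j)| < δ ∧ z ⟨0, hk⟩ ≤ M}
          < ENNReal.ofReal ε := by
  classical
  set κr : ℝ := Real.exp (-((6*M*k + k^2)/(2*c^2))) with hκr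
  have hκpos : 0 < κr := Real.exp_pos _
  set κT : ℝ := κr ^ k with hκT
  have hκTpos : 0 < κT := pow_pos hκpos k
  obtain ⟨n, hn⟩ := exists_nat_gt (max 1 (1/(ε * κT)))
  have hn1 : (1:ℝ) ≤ n := le_of_lt (lt_of_le_of_lt (le_max_left _ _) hn)
  have hnpos : (0:ℝ) < n := lt_of_lt_of_le one_pos hn1
  have hnκ : 1/(ε * κT) < n := lt_of_le_of_lt (le_max_right _ _) hn
  set δ : ℝ := 1/(2*n) with hδdef
  have hδpos : 0 < δ := by positivity
  refine ⟨δ, hδpos, ?_⟩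
  intro Ω mΩ P hP N σ hσ1 hσ2 hN hind hmap a ha haM Q hQm hQanti hQc hQpos i j hij
  have hσ : 0 < σ := hc0.trans hσ1
  set v : ℝ≥0 := (σ^2).toNNReal with hvdef
  have hv : v ≠ 0 := by
    simp only [hvdef, ne_eq, Real.toNNReal_eq_zero, not_le]
    positivity
  have hmeas : Measurable (fun ω : Ω => fun l => N l ω) := measurable_pi_lambda _ hN
  set F : (Fin k → ℝ) → ℝ≥0∞ := fun x => ∏ l, gaussianPDF 0 v (x l) with hF
  have hFm : Measurable F := Finset.measurable_prod _ fun l _ =>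
    (measurable_gaussianPDF 0 v).comp (measurable_pi_apply l)
  set ν : Measure (Fin k → ℝ) := Measure.map (fun ω l => N l ω) P with hνdef
  have hν : ν = volume.withDensity F :=
    (aux_map_pi P N hN hind _ hmap).trans (aux_pi_gauss k v hv)
  have hνprob : IsProbabilityMeasure ν := Measure.isProbabilityMeasure_map hmeas.aemeasurable
  -- sets
  set Q' : Set (Fin k → ℝ) := (fun x : Fin k → ℝ => fun l => a l + x l) ⁻¹' Q with hQ'
  have hQ'm : MeasurableSet Q' :=
    hQm.preimage (measurable_pi_lambda _ fun l => measurable_const.add (measurable_pi_apply l))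
  set gp : (Fin k → ℝ) → ℝ := fun z => (z i + a i) - (z j + a j) with hgp
  have hgpm : Measurable gp :=
    (((measurable_pi_apply i).add_const _).sub ((measurable_pi_apply j).add_const _))
  set S : Set (Fin k → ℝ) := {z | |(z i + a i) - (z j + a j)| < δ ∧ z ⟨0, hk⟩ ≤ M} with hS
  have hSm : MeasurableSet S := by
    have : S = (fun z => |gp z|) ⁻¹' (Set.Iio δ) ∩ (fun z : Fin k → ℝ => z ⟨0, hk⟩) ⁻¹' (Set.Iic M) := rfl
    rw [this]
    exact (hgpm.abs measurableSet_Iio).inter ((measurable_pi_apply _) measurableSet_Iic)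
  set E : Set (Fin k → ℝ) := Q' ∩ S with hE
  have hEm : MeasurableSet E := hQ'm.inter hSm
  -- rewrite the goal
  have hA : {ω : Ω | (fun l => a l + N l ω) ∈ Q} = (fun ω l => N l ω) ⁻¹' Q' := rfl
  have hAm : MeasurableSet {ω : Ω | (fun l => a l + N l ω) ∈ Q} := hmeas hQ'm
  have hPA : P {ω : Ω | (fun l => a l + N l ω) ∈ Q} = ν Q' := by
    rw [hνdef, Measure.map_apply hmeas hQ'm]; rfl
  rw [Measure.map_apply hmeas hSm, cond_apply hAm P, hPA]
  have hPAS : P ({ω : Ω | (fun l => a l + N l ω) ∈ Q} ∩ (fun ω l => N l ω) ⁻¹' S) = ν E := by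
    rw [hνdef, Measure.map_apply hmeas hEm]; rfl
  rw [hPAS]
  -- bounds on coordinates of points of E
  have hEbound : ∀ x ∈ E, ∀ l, x l ≤ 3*M := by
    intro x hx l
    have hzQ : (fun l => a l + x l) ∈ Q := hx.1
    have hanti := hQanti _ hzQ
    have h0l : (⟨0, hk⟩ : Fin k) ≤ l := Fin.mk_le_of_le_val (Nat.zero_le _)
    have h1 : a l + x l ≤ a ⟨0, hk⟩ + x ⟨0, hk⟩ := hanti.antitone h0l
    have h2 : x ⟨0, hk⟩ ≤ M := hx.2.2
    have h3 : a ⟨0, hk⟩ ≤ M := le_trans (le_abs_self _) (haM _)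
    have h4 : -M ≤ a l := neg_le_of_abs_le (haM l)
    linarith
  -- the gap is positive on Q'
  have hgappos : ∀ x ∈ Q', 0 < gp x := by
    intro x hx
    have hanti := hQanti _ hx
    have h2 : a j + x j < a i + x i := hanti hij
    simp only [hgp]
    linarith
  -- per-shift estimate
  have hji : ((i:ℕ):ℝ) < ((j:ℕ):ℝ) := by exact_mod_cast (Fin.lt_def.mp hij)
  have hji1 : (1:ℝ) ≤ ((j:ℕ):ℝ) - ((i:ℕ):ℝ) := by
    have : (i:ℕ) + 1 ≤ (j:ℕ) := Fin.lt_def.mp hij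
    have := (Nat.cast_le (α := ℝ)).mpr this
    push_cast at this; linarith
  set t : Fin k → ℝ := fun l => ((k:ℝ) - (l:ℕ))/(((j:ℕ):ℝ) - ((i:ℕ):ℝ)) with ht
  have htpos : ∀ l, 0 < t l := fun l =>
    div_pos (by have := l.isLt; have := (Nat.cast_lt (α := ℝ)).mpr this; linarith)
      (by linarith)
  have htanti : StrictAnti t := by
    intro l l' hll'
    have hnum : ((k:ℝ) - ((l':Fin k):ℕ)) < (k:ℝ) - ((l:Fin k):ℕ) := by
      have : (((l:Fin k):ℕ):ℝ) < (((l':Fin k):ℕ):ℝ) := by exact_mod_cast hll'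
      linarith
    show ((k:ℝ) - ((l':Fin k):ℕ))/(((j:ℕ):ℝ) - ((i:ℕ):ℝ)) < ((k:ℝ) - ((l:Fin k):ℕ))/(((j:ℕ):ℝ) - ((i:ℕ):ℝ))
    gcongr

  have htle : ∀ l, t l ≤ k := by
    intro l
    have h1 : t l ≤ (k:ℝ) - (l:ℕ) := by
      rw [ht]
      exact div_le_self (by have := l.isLt; have := (Nat.cast_lt (α := ℝ)).mpr this; linarith)
        hji1
    have : (0:ℝ) ≤ (l:ℕ) := Nat.cast_nonneg _
    linarith
  have htij : t i - t j = 1 := by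
    rw [ht, div_sub_div_same,
      show ((k:ℝ) - (i:ℕ)) - ((k:ℝ) - (j:ℕ)) = ((j:ℕ):ℝ) - ((i:ℕ):ℝ) by ring]
    exact div_self (by linarith)
  -- the G sets
  set G : ℕ → Set (Fin k → ℝ) := fun m => {y | (2*m+1)*δ < gp y ∧ gp y < (2*m+2)*δ} with hG
  have hGm : ∀ m, MeasurableSet (G m) := by
    intro m
    have : G m = gp ⁻¹' (Set.Ioo ((2*m+1)*δ) ((2*m+2)*δ)) := rfl
    rw [this]; exact hgpm measurableSet_Ioo
  -- key claim
  have key : ∀ m, m < n → ENNReal.ofReal κT * ν E ≤ ν (Q' ∩ G m) := by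
    intro m hm
    set β : ℝ := (2*m+1)*δ with hβ
    have hβpos : 0 < β := by positivity
    have hβ1 : β < 1 := by
      have hmn : (m:ℝ) + 1 ≤ n := by exact_mod_cast hm
      rw [hβ, hδdef, mul_one_div]
      exact (div_lt_one (by positivity)).mpr (by linarith)
    set w : Fin k → ℝ := fun l => β * t l with hw
    have hwpos : ∀ l, 0 < w l := fun l => mul_pos hβpos (htpos l)
    have hwanti : StrictAnti w := fun l l' h => by
      exact mul_lt_mul_of_pos_left (htanti h) hβpos
    have hwle : ∀ l, w l ≤ k := by
      intro l
      calc w l ≤ 1 * t l := by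
            apply mul_le_mul_of_nonneg_right (le_of_lt hβ1) (le_of_lt (htpos l))
        _ = t l := one_mul _
        _ ≤ k := htle l
    have hwij : w i - w j = β := by
      show β * t i - β * t j = β
      rw [← mul_sub, htij, mul_one]
    set E' : Set (Fin k → ℝ) := (fun y => y - w) ⁻¹' E with hE'
    have hsubm : Measurable (fun y : Fin k → ℝ => y - w) :=
      measurable_pi_lambda _ fun l => (measurable_pi_apply l).sub measurable_const
    have haddm : Measurable (fun x : Fin k → ℝ => x + w) :=
      measurable_pi_lambda _ fun l => (measurable_pi_apply l).add measurable_const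
    have hE'm : MeasurableSet E' := hsubm hEm
    have hE'sub : E' ⊆ Q' ∩ G m := by
      intro y hy
      have hx : y - w ∈ E := hy
      obtain ⟨hxQ, hxS⟩ := hx
      have hyx : ∀ l, y l = (y - w) l + w l := fun l => by simp
      have hyQ : y ∈ Q' := by
        have hz : (fun l => a l + (y - w) l) + w ∈ Q := hQc _ hxQ w hwanti hwpos
        have : (fun l => a l + y l) = (fun l => a l + (y - w) l) + w := by
          funext l; simp only [Pi.add_apply, Pi.sub_apply]; ring
        simp only [hQ', Set.mem_preimage, this]
        exact hz
      refine ⟨hyQ, ?_, ?_⟩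
      · have h1 : 0 < gp (y - w) := hgappos _ hxQ
        have h2 : gp y = gp (y - w) + β := by
          simp only [hgp, Pi.sub_apply]; rw [← hwij]; ring
        rw [h2]; linarith
      · have h1 : gp (y - w) < δ := (abs_lt.mp hxS.1).2
        have h2 : gp y = gp (y - w) + β := by
          simp only [hgp, Pi.sub_apply]; rw [← hwij]; ring
        rw [h2, hβ]; linarith
    refine le_trans ?_ (measure_mono hE'sub)
    -- translation estimate
    have hmapvol : Measure.map (fun x : Fin k → ℝ => x + w) volume = volume :=
      map_add_right_eq_self volume w
    have hpoint : ∀ x ∈ E, ENNReal.ofReal κT * F x ≤ F (x + w) := by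
      intro x hx
      have hxb := hEbound x hx
      rw [hF]
      simp only
      have : ENNReal.ofReal κT = ∏ _l : Fin k, ENNReal.ofReal κr := by
        rw [Finset.prod_const, ← ENNReal.ofReal_pow (le_of_lt hκpos)]
        simp [hκT, Finset.card_univ]
      rw [this, ← Finset.prod_mul_distrib]
      refine Finset.prod_le_prod' fun l _ => ?_
      simp only [gaussianPDF, Pi.add_apply]
      rw [← ENNReal.ofReal_mul (le_of_lt hκpos)]
      exact ENNReal.ofReal_le_ofReal
        (aux_pdf_term M c σ hM hc0 hσ1 k (x l) (w l) (hxb l) (le_of_lt (hwpos l)) (hwle l))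
    calc ENNReal.ofReal κT * ν E = ∫⁻ x in E, ENNReal.ofReal κT * F x ∂volume := by
          rw [hν, withDensity_apply _ hEm, lintegral_const_mul _ hFm]
      _ ≤ ∫⁻ x in E, F (x + w) ∂volume := setLIntegral_mono (hFm.comp haddm) hpoint
      _ = ∫⁻ y in E', F y ∂volume := by
          have hpre : (fun x : Fin k → ℝ => x + w) ⁻¹' E' = E := by
            ext x; simp [hE', add_sub_cancel_right]
          conv_rhs => rw [← hmapvol]
          rw [setLIntegral_map hE'm hFm haddm, hpre]
      _ = ν E' := by rw [hν, withDensity_apply _ hE'm]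
  -- summation
  have hauxdisj : ∀ p q : ℕ, p < q → ∀ y, y ∈ Q' ∩ G p → y ∈ Q' ∩ G q → False := by
    intro p q hpq y hy hy'
    have h1 : gp y < (2*p+2)*δ := hy.2.2
    have h2 : (2*q+1)*δ < gp y := hy'.2.1
    have h3 : (p:ℝ) + 1 ≤ q := by exact_mod_cast hpq
    nlinarith [hδpos]
  have hdisj : (↑(Finset.range n) : Set ℕ).PairwiseDisjoint (fun m => Q' ∩ G m) := by
    intro m hm m' hm' hne
    simp only [Function.onFun, Set.disjoint_left]
    intro y hy hy'
    rcases lt_or_gt_of_ne hne with h | h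
    · exact hauxdisj m m' h y hy hy'
    · exact hauxdisj m' m h y hy' hy
  have hsum : (n : ℝ≥0∞) * (ENNReal.ofReal κT * ν E) ≤ ν Q' := by
    calc (n : ℝ≥0∞) * (ENNReal.ofReal κT * ν E)
        = ∑ _m ∈ Finset.range n, ENNReal.ofReal κT * ν E := by
          rw [Finset.sum_const, Finset.card_range, nsmul_eq_mul]
      _ ≤ ∑ m ∈ Finset.range n, ν (Q' ∩ G m) :=
          Finset.sum_le_sum fun m hm => key m (Finset.mem_range.mp hm)
      _ = ν (⋃ m ∈ Finset.range n, Q' ∩ G m) :=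
          (measure_biUnion_finset hdisj fun m _ => hQ'm.inter (hGm m)).symm
      _ ≤ ν Q' := measure_mono (by
          intro y hy
          simp only [Set.mem_iUnion] at hy
          obtain ⟨m, _, hm⟩ := hy
          exact hm.1)
  -- conclude
  have hq0 : ν Q' ≠ 0 := by rw [← hPA]; exact hQpos
  have hqt : ν Q' ≠ ⊤ := measure_ne_top ν _
  have hn0 : n ≠ 0 := by
    intro h; rw [h] at hnpos; simp at hnpos
  set K : ℝ≥0∞ := (n : ℝ≥0∞) * ENNReal.ofReal κT with hK
  have hK0 : K ≠ 0 := by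
    apply mul_ne_zero
    · exact_mod_cast hn0
    · simp only [ne_eq, ENNReal.ofReal_eq_zero, not_le]
      exact hκTpos
  have hKt : K ≠ ⊤ := ENNReal.mul_ne_top (ENNReal.natCast_ne_top n) ENNReal.ofReal_ne_top
  have hsum' : K * ν E ≤ ν Q' := by rw [hK, mul_assoc]; exact hsum
  have h1 : ν E ≤ K⁻¹ * ν Q' := by
    calc ν E = K⁻¹ * (K * ν E) := by
          rw [← mul_assoc, ENNReal.inv_mul_cancel hK0 hKt, one_mul]
      _ ≤ K⁻¹ * ν Q' := mul_le_mul_right hsum' _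
  have hle : (ν Q')⁻¹ * ν E ≤ K⁻¹ := by
    calc (ν Q')⁻¹ * ν E ≤ (ν Q')⁻¹ * (K⁻¹ * ν Q') := mul_le_mul_right h1 _
      _ = K⁻¹ * ((ν Q')⁻¹ * ν Q') := by
          rw [← mul_assoc, mul_comm ((ν Q')⁻¹) (K⁻¹), mul_assoc]
      _ = K⁻¹ := by rw [ENNReal.inv_mul_cancel hq0 hqt, mul_one]
  refine lt_of_le_of_lt hle ?_
  have hKr : K = ENNReal.ofReal ((n:ℝ) * κT) := by
    rw [ENNReal.ofReal_mul (Nat.cast_nonneg n), ENNReal.ofReal_natCast]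
  have hnκT : (0:ℝ) < (n:ℝ) * κT := by positivity
  rw [hKr, ← ENNReal.ofReal_inv_of_pos hnκT]
  rw [ENNReal.ofReal_lt_ofReal_iff hε]
  rw [inv_eq_one_div, div_lt_iff₀ hnκT]
  have : 1 < (n:ℝ) * (ε * κT) := by
    rw [div_lt_iff₀ (by positivity)] at hnκ
    linarith
  linarith [this]
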